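/- arXiv:2003.12872 — 3 statements merged into one kernel-verified Lean document; each statement's English description precedes it below -/
import Mathlib

section
/- For 0 ≤ m ≤ n integers, Σ_{i=1}^m Σ_{j=1}^n min(i,j)/(i j) = 2m - (m+1) H_m + m H_n, where H_k denotes the k-th harmonic number. -/
open Finset

/-- The `k`-th harmonicR number `H_k = ∑_{j=1}^k 1/j`. -/
noncomputable def harmonicR (k : ℕ) : ℝ := ∑ j ∈ Finset.Icc 1 k, (1 : ℝ) / j

lemma harmonicR_succ (k : ℕ) : harmonicR (k + 1) = harmonicR k + 1 / (k + 1) := by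
  rw [harmonicR, harmonicR, Finset.sum_Icc_succ_top (by omega)]
  push_cast
  ring

lemma square_sum (m : ℕ) :
    ∑ i ∈ Finset.Icc 1 m, ∑ j ∈ Finset.Icc 1 m, (min i j : ℝ) / (i * j)
      = 2 * m - harmonicR m := by
  induction m with
  | zero => simp [harmonicR]
  | succ m ih =>
    have hrow : ∑ j ∈ Finset.Icc 1 (m+1), (min (m+1) j : ℝ) / ((m+1) * j) = 1 := by
      have h : ∀ j ∈ Finset.Icc 1 (m+1), (min (m+1) j : ℝ) / ((m+1) * j) = 1 / (m+1) := by
        intro j hj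
        simp only [Finset.mem_Icc] at hj
        have hj0 : (j : ℝ) ≠ 0 := by exact_mod_cast Nat.one_le_iff_ne_zero.mp hj.1
        have hle : (j : ℝ) ≤ (m:ℝ) + 1 := by exact_mod_cast hj.2
        push_cast
        rw [min_eq_right hle]
        field_simp
      rw [Finset.sum_congr rfl h, Finset.sum_const, Nat.card_Icc]
      simp only [Nat.add_sub_cancel, nsmul_eq_mul]
      push_cast
      field_simp
    have hsplit : ∀ i ∈ Finset.Icc 1 m,
        ∑ j ∈ Finset.Icc 1 (m+1), (min i j : ℝ) / (i * j)
        = (∑ j ∈ Finset.Icc 1 m, (min i j : ℝ) / (i * j)) + 1 / (m+1) := by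
      intro i hi
      simp only [Finset.mem_Icc] at hi
      rw [Finset.sum_Icc_succ_top (by omega)]
      have hi0 : (i : ℝ) ≠ 0 := by exact_mod_cast Nat.one_le_iff_ne_zero.mp hi.1
      have hle : (i : ℝ) ≤ (m:ℝ) + 1 := by exact_mod_cast (by omega : i ≤ m + 1)
      push_cast
      rw [min_eq_left hle]
      field_simp
    rw [Finset.sum_Icc_succ_top (by omega), Finset.sum_congr rfl hsplit,
      Finset.sum_add_distrib, ih, Finset.sum_const, Nat.card_Icc, harmonicR_succ]
    simp only [Nat.add_sub_cancel, nsmul_eq_mul]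
    have hm1 : (m:ℝ) + 1 ≠ 0 := by positivity
    push_cast
    rw [hrow]
    field_simp
    ring

theorem double_sum_min_identity (m n : ℕ) (hmn : m ≤ n) :
    ∑ i ∈ Finset.Icc 1 m, ∑ j ∈ Finset.Icc 1 n, (min i j : ℝ) / (i * j)
      = 2 * m - (m + 1) * harmonicR m + m * harmonicR n := by
  induction n, hmn using Nat.le_induction with
  | base =>
    rw [square_sum]
    ring
  | succ n hn ih =>
    have hsplit : ∀ i ∈ Finset.Icc 1 m,
        ∑ j ∈ Finset.Icc 1 (n+1), (min i j : ℝ) / (i * j)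
        = (∑ j ∈ Finset.Icc 1 n, (min i j : ℝ) / (i * j)) + 1 / (n+1) := by
      intro i hi
      simp only [Finset.mem_Icc] at hi
      rw [Finset.sum_Icc_succ_top (by omega)]
      have hi0 : (i : ℝ) ≠ 0 := by exact_mod_cast Nat.one_le_iff_ne_zero.mp hi.1
      have hle : (i : ℝ) ≤ (n:ℝ) + 1 := by exact_mod_cast (by omega : i ≤ n + 1)
      push_cast
      rw [min_eq_left hle]
      field_simp
    rw [Finset.sum_congr rfl hsplit, Finset.sum_add_distrib, ih, Finset.sum_const,
      Nat.card_Icc, harmonicR_succ]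
    simp only [Nat.add_sub_cancel, nsmul_eq_mul]
    push_cast
    ring
end

section
/- Given partitions α, β of n, there exists a bipartite graph with parts A, B such that the degree sequence on A is α and the degree sequence on B is β if and only if α ⪯ β', where β' is the conjugate of β and ⪯ is the dominance order. -/
open Finset SimpleGraph

/-- The conjugate partition: `conjugate f i` is the number of parts of size at least `i + 1`. -/
noncomputable def conjugate (f : ℕ → ℕ) (i : ℕ) : ℕ :=
  Nat.card {j : ℕ | i + 1 ≤ f j}

open scoped Classical

-- A: downward closed finsets of ℕ are ranges
lemma down_eq_range (S : Finset ℕ) (h : ∀ k k', k' ≤ k → k ∈ S → k' ∈ S) :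
    S = Finset.range S.card := by
  ext k
  simp only [Finset.mem_range]
  constructor
  · intro hk
    have hsub : Finset.range (k+1) ⊆ S := fun x hx => h k x (by simpa using Nat.lt_succ_iff.mp (Finset.mem_range.mp hx)) hk
    have := Finset.card_le_card hsub
    simpa using this
  · intro hk
    by_contra hkn
    have hsub : S ⊆ Finset.range k := by
      intro x hx
      simp only [Finset.mem_range]
      by_contra hxk
      exact hkn (h x k (Nat.le_of_not_lt hxk) hx)
    have := Finset.card_le_card hsub
    simp at this
    omega

-- B
lemma conj_eq_card (n : ℕ) (β : ℕ → ℕ) (hβs : ∀ i, n ≤ i → β i = 0) (i : ℕ) :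
    conjugate β i = ((Finset.range n).filter (fun j => i + 1 ≤ β j)).card := by
  have hset : {j : ℕ | i + 1 ≤ β j} = ↑((Finset.range n).filter (fun j => i + 1 ≤ β j)) := by
    ext j
    simp only [Set.mem_setOf_eq, Finset.coe_filter, Finset.mem_range, Set.mem_setOf_eq]
    constructor
    · intro hj
      refine ⟨?_, hj⟩
      by_contra h
      rw [hβs j (Nat.le_of_not_lt h)] at hj; omega
    · exact fun h => h.2
  rw [conjugate, hset, Nat.card_coe_set_eq, Set.ncard_coe_finset]

lemma beta_le (n : ℕ) (β : ℕ → ℕ) (hβa : Antitone β) (hβsum : ∑ i ∈ Finset.range n, β i = n)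
    (hβs : ∀ i, n ≤ i → β i = 0) (j : ℕ) : β j ≤ n := by
  rcases Nat.eq_zero_or_pos n with h0 | hpos
  · subst h0; simp [hβs j (Nat.zero_le j)]
  · calc β j ≤ β 0 := hβa (Nat.zero_le j)
      _ ≤ ∑ i ∈ Finset.range n, β i := Finset.single_le_sum (fun i _ => Nat.zero_le _) (Finset.mem_range.mpr hpos)
      _ = n := hβsum

lemma conj_le (n : ℕ) (β : ℕ → ℕ) (hβs : ∀ i, n ≤ i → β i = 0) (i : ℕ) :
    conjugate β i ≤ n := by
  rw [conj_eq_card n β hβs i]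
  calc _ ≤ (Finset.range n).card := Finset.card_filter_le _ _
    _ = n := Finset.card_range n

lemma conj_supp (n : ℕ) (β : ℕ → ℕ) (hβn : ∀ j, β j ≤ n) (hβs : ∀ i, n ≤ i → β i = 0)
    (i : ℕ) (hi : n ≤ i) : conjugate β i = 0 := by
  rw [conj_eq_card n β hβs i, Finset.card_eq_zero, Finset.filter_eq_empty_iff]
  intro j _
  have := hβn j
  omega

lemma conj_anti (n : ℕ) (β : ℕ → ℕ) (hβs : ∀ i, n ≤ i → β i = 0) :
    Antitone (conjugate β) := by
  intro i j hij
  rw [conj_eq_card n β hβs, conj_eq_card n β hβs]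
  apply Finset.card_le_card
  intro k hk
  simp only [Finset.mem_filter, Finset.mem_range] at *
  omega

-- C: membership characterization
lemma lt_conj_iff (n : ℕ) (β : ℕ → ℕ) (hβa : Antitone β) (hβs : ∀ i, n ≤ i → β i = 0)
    (i k : ℕ) : k < conjugate β i ↔ i + 1 ≤ β k := by
  have hfilt : (Finset.range n).filter (fun j => i + 1 ≤ β j) = Finset.range (conjugate β i) := by
    rw [conj_eq_card n β hβs i]
    apply down_eq_range
    intro a b hba ha
    simp only [Finset.mem_filter, Finset.mem_range] at *
    exact ⟨lt_of_le_of_lt hba ha.1, le_trans ha.2 (hβa hba)⟩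
  constructor
  · intro hk
    have hkn : k < n := lt_of_lt_of_le hk (conj_le n β hβs i)
    have : k ∈ Finset.range (conjugate β i) := Finset.mem_range.mpr hk
    rw [← hfilt] at this
    exact (Finset.mem_filter.mp this).2
  · intro hk
    have hkn : k < n := by
      by_contra h
      rw [hβs k (Nat.le_of_not_lt h)] at hk; omega
    have : k ∈ (Finset.range n).filter (fun j => i + 1 ≤ β j) :=
      Finset.mem_filter.mpr ⟨Finset.mem_range.mpr hkn, hk⟩
    rw [hfilt] at this
    exact Finset.mem_range.mp this

-- E: biconjugate
lemma biconj (n : ℕ) (β : ℕ → ℕ) (hβa : Antitone β) (hβn : ∀ j, β j ≤ n)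
    (hβs : ∀ i, n ≤ i → β i = 0) (i : ℕ) :
    conjugate (conjugate β) i = β i := by
  have hcs : ∀ j, n ≤ j → conjugate β j = 0 := conj_supp n β hβn hβs
  rw [conj_eq_card n (conjugate β) hcs i]
  have : (Finset.range n).filter (fun j => i + 1 ≤ conjugate β j)
      = (Finset.range n).filter (fun j => j < β i) := by
    apply Finset.filter_congr
    intro j _
    exact lt_conj_iff n β hβa hβs j i
  rw [this]
  have : (Finset.range n).filter (fun j => j < β i) = Finset.range (β i) := by
    ext j
    simp only [Finset.mem_filter, Finset.mem_range]
    have := hβn i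
    constructor
    · exact fun h => h.2
    · intro h; exact ⟨lt_of_lt_of_le h (hβn i), h⟩
  rw [this, Finset.card_range]

-- F: partial sums of conjugate
lemma sum_conj (n : ℕ) (β : ℕ → ℕ) (hβs : ∀ i, n ≤ i → β i = 0) (i : ℕ) :
    ∑ j ∈ Finset.range i, conjugate β j = ∑ b ∈ Finset.range n, min i (β b) := by
  have : ∀ j, conjugate β j = ∑ b ∈ Finset.range n, if j + 1 ≤ β b then 1 else 0 := by
    intro j
    rw [conj_eq_card n β hβs j, Finset.card_filter]
  simp_rw [this]
  rw [Finset.sum_comm]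
  apply Finset.sum_congr rfl
  intro b _
  rw [← Finset.card_filter]
  have : (Finset.range i).filter (fun j => j + 1 ≤ β b) = Finset.range (min i (β b)) := by
    ext j
    simp only [Finset.mem_filter, Finset.mem_range]
    omega
  rw [this, Finset.card_range]

lemma sum_conj_total (n : ℕ) (β : ℕ → ℕ) (hβn : ∀ j, β j ≤ n) (hβs : ∀ i, n ≤ i → β i = 0) :
    ∑ j ∈ Finset.range n, conjugate β j = ∑ j ∈ Finset.range n, β j := by
  rw [sum_conj n β hβs n]
  apply Finset.sum_congr rfl
  intro b _
  exact min_eq_right (hβn b)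

lemma card_filter_fin (n : ℕ) (p : ℕ → Prop) [DecidablePred p] :
    ((Finset.univ : Finset (Fin n)).filter (fun a => p a.val)).card
      = ((Finset.range n).filter p).card := by
  rw [Finset.card_filter, Finset.card_filter,
    Fin.sum_univ_eq_sum_range (fun j => if p j then 1 else 0)]

lemma matrix_base (n : ℕ) (β : ℕ → ℕ) (hβa : Antitone β) (hβn : ∀ j, β j ≤ n)
    (hβs : ∀ i, n ≤ i → β i = 0) :
    ∃ M : Fin n → Fin n → Prop,
      (∀ a, (Finset.univ.filter fun b => M a b).card = conjugate β a.val) ∧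
      (∀ b, (Finset.univ.filter fun a => M a b).card = β b.val) := by
  refine ⟨fun a b => b.val < conjugate β a.val, ?_, ?_⟩
  · intro a
    convert card_filter_fin n (fun j => j < conjugate β a.val) using 2
    · ext x
      simp [Finset.mem_filter]
    · have hle : conjugate β a.val ≤ n := conj_le n β hβs a.val
      have h2 : (Finset.range n).filter (fun j => j < conjugate β a.val)
          = Finset.range (conjugate β a.val) := by
        ext j
        simp only [Finset.mem_filter, Finset.mem_range]
        omega
      rw [h2, Finset.card_range]
  · intro b
    convert card_filter_fin n (fun j => b.val + 1 ≤ conjugate β j) using 2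
    · ext x
      simp [Finset.mem_filter]
    · have hcs : ∀ j, n ≤ j → conjugate β j = 0 := conj_supp n β hβn hβs
      rw [← conj_eq_card n (conjugate β) hcs b.val, biconj n β hβa hβn hβs]

def psum (f : ℕ → ℕ) (m : ℕ) : ℕ := ∑ j ∈ Finset.range m, f j

lemma psum_succ (f : ℕ → ℕ) (m : ℕ) : psum f (m+1) = psum f m + f m :=
  Finset.sum_range_succ f m

lemma meas_zero (n : ℕ) (α γ : ℕ → ℕ) (hαs : ∀ i, n ≤ i → α i = 0) (hγs : ∀ i, n ≤ i → γ i = 0)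
    (hdom : ∀ i, psum α i ≤ psum γ i)
    (hmeas : ∑ m ∈ Finset.range n, (psum γ (m+1) - psum α (m+1)) = 0) :
    ∀ i, α i = γ i := by
  have hterm : ∀ m, m < n → psum γ (m+1) = psum α (m+1) := by
    intro m hm
    have h1 := Finset.sum_eq_zero_iff.mp hmeas m (Finset.mem_range.mpr hm)
    have h2 := hdom (m+1)
    omega
  have heqS : ∀ m, m ≤ n → psum α m = psum γ m := by
    intro m hm
    rcases Nat.eq_zero_or_pos m with rfl|hp
    · simp [psum]
    · have h1 := hterm (m-1) (by omega)
      have h2 : m - 1 + 1 = m := by omega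
      rw [h2] at h1
      omega
  intro k
  by_cases hk : k < n
  · have h1 := heqS k (by omega)
    have h2 := heqS (k+1) (by omega)
    have e1 : psum α (k+1) = psum α k + α k := psum_succ α k
    have e2 : psum γ (k+1) = psum γ k + γ k := psum_succ γ k
    omega
  · rw [hαs k (by omega), hγs k (by omega)]

lemma raise (n : ℕ) (α γ : ℕ → ℕ) (hαa : Antitone α) (hαs : ∀ m, n ≤ m → α m = 0)
    (hγa : Antitone γ) (hγs : ∀ m, n ≤ m → γ m = 0)
    (htot : psum α n = psum γ n) (hdom : ∀ m, psum α m ≤ psum γ m)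
    (hne : ∃ k, α k ≠ γ k) :
    ∃ (i e : ℕ) (α' : ℕ → ℕ), i < e ∧ e < n ∧ Antitone α' ∧ (∀ m, n ≤ m → α' m = 0) ∧
      α' i = α i + 1 ∧ α' e = α e - 1 ∧ 1 ≤ α e ∧ (∀ m, m ≠ i → m ≠ e → α' m = α m) ∧
      psum α' n = psum α n ∧
      (∀ m, psum α' m ≤ psum γ m) ∧
      ∑ m ∈ Finset.range n, (psum γ (m+1) - psum α' (m+1))
        < ∑ m ∈ Finset.range n, (psum γ (m+1) - psum α (m+1)) := by
  classical
  let i := Nat.find hne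
  have hi_ne : α i ≠ γ i := Nat.find_spec hne
  have hi_min : ∀ k, k < i → α k = γ k := fun k hk => not_not.mp (Nat.find_min hne hk)
  have hSi : psum α i = psum γ i :=
    Finset.sum_congr rfl (fun k hk => hi_min k (Finset.mem_range.mp hk))
  have hi_lt : α i < γ i := by
    have hd := hdom (i+1)
    rw [psum_succ, psum_succ] at hd
    omega
  have hi_n : i < n := by
    by_contra h
    rw [hαs i (by omega), hγs i (by omega)] at hi_ne
    exact hi_ne rfl
  have hi_n1 : i + 1 < n := by
    by_contra h
    have hin : i + 1 = n := by omega
    have e1 : psum α (i+1) = psum α i + α i := psum_succ α i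
    have e2 : psum γ (i+1) = psum γ i + γ i := psum_succ γ i
    rw [hin] at e1 e2
    omega
  have hw : i < n - 1 ∧ psum α ((n-1)+1) = psum γ ((n-1)+1) := by
    refine ⟨by omega, ?_⟩
    have h2 : n - 1 + 1 = n := by omega
    rw [h2]
    exact htot
  have hq : ∃ e, i < e ∧ psum α (e+1) = psum γ (e+1) := ⟨n-1, hw⟩
  let e := Nat.find hq
  have he : i < e ∧ psum α (e+1) = psum γ (e+1) := Nat.find_spec hq
  have he_le : e ≤ n - 1 := Nat.find_min' hq hw
  have he_n : e < n := by omega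
  have hstrict : ∀ m, i ≤ m → m < e → psum α (m+1) < psum γ (m+1) := by
    intro m h1 h2
    rcases eq_or_lt_of_le h1 with h1'|h1'
    · have e1 : psum α (m+1) = psum α m + α m := psum_succ α m
      have e2 : psum γ (m+1) = psum γ m + γ m := psum_succ γ m
      have h4 : α m < γ m := h1' ▸ hi_lt
      have h5 : psum α m = psum γ m := h1' ▸ hSi
      omega
    · have hnp : ¬ (i < m ∧ psum α (m+1) = psum γ (m+1)) := Nat.find_min hq h2
      have hd := hdom (m+1)
      have : psum α (m+1) ≠ psum γ (m+1) := fun hh => hnp ⟨h1', hh⟩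
      omega
  have hαe_gt : γ e < α e := by
    have h1 : psum α e < psum γ e := by
      have h2 := hstrict (e-1) (by omega) (by omega)
      have h3 : e - 1 + 1 = e := by omega
      rw [h3] at h2
      exact h2
    have h4 := he.2
    rw [psum_succ, psum_succ] at h4
    omega
  have hae1 : 1 ≤ α e := by omega
  have hstep : α (e+1) < α e := by
    by_contra hc
    have hc' : α (e+1) = α e := le_antisymm (hαa (by omega)) (le_of_not_gt hc)
    have hd := hdom (e+2)
    have e1 : psum α (e+2) = psum α (e+1) + α (e+1) := psum_succ α (e+1)
    have e2 : psum γ (e+2) = psum γ (e+1) + γ (e+1) := psum_succ γ (e+1)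
    have hγm : γ (e+1) ≤ γ e := hγa (by omega)
    have h4 := he.2
    omega
  have hne_ie : i ≠ e := by omega
  set αp : ℕ → ℕ := fun m => if m = i then α i + 1 else if m = e then α e - 1 else α m
    with hαpdef
  have hv_i : αp i = α i + 1 := by rw [hαpdef]; simp
  have hv_e : αp e = α e - 1 := by
    rw [hαpdef]
    beta_reduce
    rw [if_neg (by omega), if_pos rfl]
  have hv_o : ∀ m, m ≠ i → m ≠ e → αp m = α m := by
    intro m h1 h2
    rw [hαpdef]
    beta_reduce
    rw [if_neg h1, if_neg h2]
  have hαpa : Antitone αp := by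
    apply antitone_nat_of_succ_le
    intro m
    by_cases h1 : m + 1 = i
    · have him : α m = γ m := hi_min m (by omega)
      have hγm : γ i ≤ γ m := hγa (by omega)
      rw [h1, hv_i, hv_o m (by omega) (by omega)]
      omega
    · by_cases h2 : m + 1 = e
      · by_cases h3 : m = i
        · rw [h2, hv_e, h3, hv_i]
          have := hαa (show i ≤ e by omega)
          omega
        · rw [h2, hv_e, hv_o m h3 (by omega)]
          have := hαa (show m ≤ e by omega)
          omega
      · by_cases h3 : m = i
        · rw [hv_o (m+1) h1 h2, h3, hv_i]
          have := hαa (show i ≤ i + 1 by omega)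
          omega
        · by_cases h4 : m = e
          · rw [hv_o (m+1) h1 h2, h4, hv_e]
            omega
          · rw [hv_o (m+1) h1 h2, hv_o m h3 h4]
            exact hαa (show m ≤ m + 1 by omega)
  have hαps : ∀ m, n ≤ m → αp m = 0 := by
    intro m hm
    rw [hv_o m (by omega) (by omega)]
    exact hαs m hm
  have hS : ∀ m, psum αp m = if i < m ∧ m ≤ e then psum α m + 1 else psum α m := by
    intro m
    induction m with
    | zero => simp [psum]
    | succ m ihm =>
      rw [psum_succ, psum_succ, ihm]
      by_cases h1 : m = i
      · rw [h1, hv_i]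
        split_ifs <;> omega
      · by_cases h2 : m = e
        · rw [h2, hv_e]
          split_ifs <;> omega
        · rw [hv_o m h1 h2]
          split_ifs <;> omega
  have hsum' : psum αp n = psum α n := by
    rw [hS n, if_neg (by omega)]
  have hdom' : ∀ m, psum αp m ≤ psum γ m := by
    intro m
    rw [hS m]
    split_ifs with h
    · have h2 := hstrict (m-1) (by omega) (by omega)
      have h3 : m - 1 + 1 = m := by omega
      rw [h3] at h2
      omega
    · exact hdom m
  have hmeas' : ∑ m ∈ Finset.range n, (psum γ (m+1) - psum αp (m+1))
      < ∑ m ∈ Finset.range n, (psum γ (m+1) - psum α (m+1)) := by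
    apply Finset.sum_lt_sum
    · intro m _
      rw [hS (m+1)]
      split_ifs <;> omega
    · refine ⟨i, Finset.mem_range.mpr hi_n, ?_⟩
      rw [hS (i+1), if_pos ⟨by omega, by omega⟩]
      have h2 := hstrict i le_rfl he.1
      omega
  exact ⟨i, e, αp, he.1, he_n, hαpa, hαps, hv_i, hv_e, hae1, hv_o, hsum', hdom', hmeas'⟩

lemma card_filter_eq_of_iff {γ : Type*} (s : Finset γ) (p : γ → Prop) (ip : DecidablePred p)
    (t : Finset γ) (c : ℕ) (h : ∀ x, x ∈ t ↔ x ∈ s ∧ p x) (hc : t.card = c) :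
    (@Finset.filter γ p ip s).card = c := by
  have he : @Finset.filter γ p ip s = t := by
    ext x
    rw [Finset.mem_filter, h x]
  rw [he, hc]

lemma exists_matrix (n : ℕ) (β : ℕ → ℕ) (hβa : Antitone β) (hβn : ∀ j, β j ≤ n)
    (hβs : ∀ i, n ≤ i → β i = 0) :
    ∀ (D : ℕ) (α : ℕ → ℕ), Antitone α → (∀ i, n ≤ i → α i = 0) →
    (psum α n = psum β n) →
    (∀ m, psum α m ≤ psum (conjugate β) m) →
    (∑ m ∈ Finset.range n, (psum (conjugate β) (m+1) - psum α (m+1)) ≤ D) →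
    ∃ M : Fin n → Fin n → Prop,
      (∀ a, (Finset.univ.filter fun b => M a b).card = α a.val) ∧
      (∀ b, (Finset.univ.filter fun a => M a b).card = β b.val) := by
  have hγa : Antitone (conjugate β) := conj_anti n β hβs
  have hγs : ∀ i, n ≤ i → conjugate β i = 0 := conj_supp n β hβn hβs
  have hγtot : psum (conjugate β) n = psum β n := sum_conj_total n β hβn hβs
  intro D
  induction D with
  | zero =>
    intro α hαa hαs hsum hdom hmeas
    have heq : ∀ k, α k = conjugate β k :=
      meas_zero n α (conjugate β) hαs hγs hdom (by omega)
    obtain ⟨M, h1, h2⟩ := matrix_base n β hβa hβn hβs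
    refine ⟨M, fun a => ?_, h2⟩
    rw [h1 a]
    exact (heq a.val).symm
  | succ D ih =>
    intro α hαa hαs hsum hdom hmeas
    by_cases h0 : ∑ m ∈ Finset.range n, (psum (conjugate β) (m+1) - psum α (m+1)) = 0
    · have heq : ∀ k, α k = conjugate β k :=
        meas_zero n α (conjugate β) hαs hγs hdom h0
      obtain ⟨M, h1, h2⟩ := matrix_base n β hβa hβn hβs
      refine ⟨M, fun a => ?_, h2⟩
      rw [h1 a]
      exact (heq a.val).symm
    · have hne : ∃ k, α k ≠ conjugate β k := by
        by_contra h
        push_neg at h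
        apply h0
        apply Finset.sum_eq_zero
        intro m _
        have : psum α (m+1) = psum (conjugate β) (m+1) :=
          Finset.sum_congr rfl (fun k _ => h k)
        omega
      obtain ⟨i, e, αp, hie, hen, hαpa, hαps, hvi, hve, hae1, hvo, hsum', hdom', hmeas'⟩ :=
        raise n α (conjugate β) hαa hαs hγa hγs (by rw [hγtot]; exact hsum) hdom hne
      obtain ⟨M', hrow, hcol⟩ := ih αp hαpa hαps (by rw [hsum']; exact hsum) hdom' (by omega)
      have hi_n : i < n := by omega
      set I : Fin n := ⟨i, hi_n⟩ with hI
      set E : Fin n := ⟨e, hen⟩ with hE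
      have hIE : I ≠ E := by
        intro h
        rw [Fin.ext_iff] at h
        simp only [hI, hE] at h
        omega
      have hrowI : (Finset.univ.filter fun b => M' I b).card = α i + 1 := by
        rw [hrow I]
        exact hvi
      have hrowE : (Finset.univ.filter fun b => M' E b).card = α e - 1 := by
        rw [hrow E]
        exact hve
      have hcard_lt : (Finset.univ.filter fun b => M' E b).card
          < (Finset.univ.filter fun b => M' I b).card := by
        rw [hrowI, hrowE]
        have := hαa (le_of_lt hie)
        omega
      have hnotsub : ¬ (Finset.univ.filter fun b => M' I b) ⊆ (Finset.univ.filter fun b => M' E b) := by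
        intro hs
        have := Finset.card_le_card hs
        omega
      obtain ⟨b, hbI, hbE⟩ := Finset.not_subset.mp hnotsub
      have hMIb : M' I b := (Finset.mem_filter.mp hbI).2
      have hMEb : ¬ M' E b := fun h => hbE (Finset.mem_filter.mpr ⟨Finset.mem_univ b, h⟩)
      refine ⟨fun a b' => if a = I ∧ b' = b then False else if a = E ∧ b' = b then True
        else M' a b', ?_, ?_⟩
      · intro a
        by_cases haI : a = I
        · subst haI
          refine card_filter_eq_of_iff Finset.univ _ _
            ((Finset.univ.filter fun b' => M' I b').erase b) _ (fun x => ?_) ?_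
          · simp only [Finset.mem_erase, Finset.mem_filter, Finset.mem_univ, true_and]
            by_cases hx : x = b
            · simp [hx]
            · simp [hx, hIE]
          · rw [Finset.card_erase_of_mem hbI, hrowI]
            simp only [hI]
            omega
        · by_cases haE : a = E
          · subst haE
            refine card_filter_eq_of_iff Finset.univ _ _
              (insert b (Finset.univ.filter fun b' => M' E b')) _ (fun x => ?_) ?_
            · simp only [Finset.mem_insert, Finset.mem_filter, Finset.mem_univ, true_and]
              by_cases hx : x = b
              · simp [hx, hIE.symm]
              · simp [hx]
            · have hbnot : b ∉ (Finset.univ.filter fun b' => M' E b') := by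
                simp [hMEb]
              rw [Finset.card_insert_of_notMem hbnot, hrowE]
              simp only [hE]
              omega
          · refine card_filter_eq_of_iff Finset.univ _ _
              (Finset.univ.filter fun b' => M' a b') _ (fun x => ?_) ?_
            · simp only [Finset.mem_filter, Finset.mem_univ, true_and]
              simp [haI, haE]
            · rw [hrow a]
              apply hvo
              · intro h
                apply haI
                rw [hI]
                exact Fin.ext h
              · intro h
                apply haE
                rw [hE]
                exact Fin.ext h
      · intro b'
        by_cases hb' : b' = b
        · subst hb'
          refine card_filter_eq_of_iff Finset.univ _ _
            (insert E ((Finset.univ.filter fun a => M' a b').erase I)) _ (fun x => ?_) ?_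
          · simp only [Finset.mem_insert, Finset.mem_erase, Finset.mem_filter,
              Finset.mem_univ, true_and]
            by_cases hx1 : x = I
            · simp [hx1, hIE, hIE.symm]
            · by_cases hx2 : x = E
              · simp [hx2, hIE.symm]
              · simp [hx1, hx2]
          · have hImem : I ∈ (Finset.univ.filter fun a => M' a b') := by
              simp [hMIb]
            have hEnot : E ∉ (Finset.univ.filter fun a => M' a b').erase I := by
              simp [hMEb]
            have hpos : 1 ≤ (Finset.univ.filter fun a => M' a b').card :=
              Finset.card_pos.mpr ⟨I, hImem⟩
            have hc := hcol b'
            rw [Finset.card_insert_of_notMem hEnot, Finset.card_erase_of_mem hImem, hc]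
            omega
        · refine card_filter_eq_of_iff Finset.univ _ _
            (Finset.univ.filter fun a => M' a b') _ (fun x => ?_) ?_
          · simp only [Finset.mem_filter, Finset.mem_univ, true_and]
            simp [hb']
          · exact hcol b'

lemma degree_eq_card_inl {n : ℕ} (G : SimpleGraph (Fin n ⊕ Fin n))
    (h : ∀ a b : Fin n, ¬ G.Adj (Sum.inl a) (Sum.inl b)) (a : Fin n) :
    G.degree (Sum.inl a)
      = (Finset.univ.filter fun b => G.Adj (Sum.inl a) (Sum.inr b)).card := by
  rw [← SimpleGraph.card_neighborFinset_eq_degree]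
  have himg : G.neighborFinset (Sum.inl a)
      = (Finset.univ.filter fun b => G.Adj (Sum.inl a) (Sum.inr b)).image Sum.inr := by
    ext v
    cases v with
    | inl c => simp [SimpleGraph.mem_neighborFinset, h a c]
    | inr c => simp [SimpleGraph.mem_neighborFinset]
  rw [himg, Finset.card_image_of_injective _ Sum.inr_injective]

lemma degree_eq_card_inr {n : ℕ} (G : SimpleGraph (Fin n ⊕ Fin n))
    (h : ∀ a b : Fin n, ¬ G.Adj (Sum.inr a) (Sum.inr b)) (b : Fin n) :
    G.degree (Sum.inr b)
      = (Finset.univ.filter fun a => G.Adj (Sum.inl a) (Sum.inr b)).card := by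
  rw [← SimpleGraph.card_neighborFinset_eq_degree]
  have himg : G.neighborFinset (Sum.inr b)
      = (Finset.univ.filter fun a => G.Adj (Sum.inl a) (Sum.inr b)).image Sum.inl := by
    ext v
    cases v with
    | inl c =>
      simp only [SimpleGraph.mem_neighborFinset, Finset.mem_image, Finset.mem_filter,
        Finset.mem_univ, true_and]
      rw [SimpleGraph.adj_comm]
      constructor
      · intro hadj
        exact ⟨c, hadj, rfl⟩
      · rintro ⟨x, hx, hxe⟩
        cases hxe
        exact hx
    | inr c => simp [SimpleGraph.mem_neighborFinset, h b c]
  rw [himg, Finset.card_image_of_injective _ Sum.inl_injective]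

open scoped Classical in
theorem gale_ryser (n : ℕ) (α β : ℕ → ℕ)
    (hα_anti : Antitone α) (hα_sum : ∑ i ∈ Finset.range n, α i = n)
    (hα_supp : ∀ i, n ≤ i → α i = 0)
    (hβ_anti : Antitone β) (hβ_sum : ∑ i ∈ Finset.range n, β i = n)
    (hβ_supp : ∀ i, n ≤ i → β i = 0) :
    (∃ G : SimpleGraph (Fin n ⊕ Fin n),
      (∀ a b : Fin n, ¬ G.Adj (Sum.inl a) (Sum.inl b) ∧ ¬ G.Adj (Sum.inr a) (Sum.inr b)) ∧
      (∀ i : Fin n, G.degree (Sum.inl i) = α i) ∧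
      (∀ i : Fin n, G.degree (Sum.inr i) = β i)) ↔
    (∀ i : ℕ, ∑ j ∈ Finset.range i, α j ≤ ∑ j ∈ Finset.range i, conjugate β j) := by
  constructor
  · rintro ⟨G, hsides, hdegA, hdegB⟩ i
    have hLL : ∀ a b : Fin n, ¬ G.Adj (Sum.inl a) (Sum.inl b) := fun a b => (hsides a b).1
    have hRR : ∀ a b : Fin n, ¬ G.Adj (Sum.inr a) (Sum.inr b) := fun a b => (hsides a b).2
    have hA : ∀ a : Fin n,
        (Finset.univ.filter fun b => G.Adj (Sum.inl a) (Sum.inr b)).card = α a.val := by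
      intro a
      rw [← degree_eq_card_inl G hLL a]
      exact hdegA a
    have hB : ∀ b : Fin n,
        (Finset.univ.filter fun a => G.Adj (Sum.inl a) (Sum.inr b)).card = β b.val := by
      intro b
      rw [← degree_eq_card_inr G hRR b]
      exact hdegB b
    have hsplit : ∑ j ∈ Finset.range i, α j
        = ∑ j ∈ Finset.range n, if j < i then α j else 0 := by
      have h1 : ∑ j ∈ Finset.range i, α j
          = ∑ j ∈ Finset.range i, (if j < i then α j else 0) :=
        Finset.sum_congr rfl (fun j hj => by rw [if_pos (Finset.mem_range.mp hj)])
      have h2 : ∑ j ∈ Finset.range i, (if j < i then α j else 0)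
          = ∑ j ∈ Finset.range (max i n), (if j < i then α j else 0) := by
        apply Finset.sum_subset (Finset.range_subset_range.mpr (le_max_left i n))
        intro x _ hx
        rw [if_neg (fun hc => hx (Finset.mem_range.mpr hc))]
      have h3 : ∑ j ∈ Finset.range n, (if j < i then α j else 0)
          = ∑ j ∈ Finset.range (max i n), (if j < i then α j else 0) := by
        apply Finset.sum_subset (Finset.range_subset_range.mpr (le_max_right i n))
        intro x _ hx
        have hxn : n ≤ x := Nat.le_of_not_lt (fun hc => hx (Finset.mem_range.mpr hc))
        rw [hα_supp x hxn]
        simp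
      rw [h1, h2, ← h3]
    calc ∑ j ∈ Finset.range i, α j
        = ∑ j ∈ Finset.range n, if j < i then α j else 0 := hsplit
      _ = ∑ a : Fin n, if a.val < i then α a.val else 0 :=
          (Fin.sum_univ_eq_sum_range (fun j => if j < i then α j else 0) n).symm
      _ = ∑ a : Fin n, if a.val < i
            then (Finset.univ.filter fun b => G.Adj (Sum.inl a) (Sum.inr b)).card else 0 := by
          apply Finset.sum_congr rfl
          intro a _
          rw [hA a]
      _ = ∑ a : Fin n, ∑ b : Fin n,
            if a.val < i ∧ G.Adj (Sum.inl a) (Sum.inr b) then 1 else 0 := by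
          apply Finset.sum_congr rfl
          intro a _
          by_cases hai : a.val < i
          · rw [if_pos hai, Finset.card_filter]
            apply Finset.sum_congr rfl
            intro b _
            simp [hai]
          · rw [if_neg hai]
            symm
            apply Finset.sum_eq_zero
            intro b _
            rw [if_neg (fun hc => hai hc.1)]
      _ = ∑ b : Fin n, ∑ a : Fin n,
            if a.val < i ∧ G.Adj (Sum.inl a) (Sum.inr b) then 1 else 0 := Finset.sum_comm
      _ ≤ ∑ b : Fin n, min i (β b.val) := by
          apply Finset.sum_le_sum
          intro b _
          rw [← Finset.card_filter]
          apply le_min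
          · calc (Finset.univ.filter fun a : Fin n =>
                  a.val < i ∧ G.Adj (Sum.inl a) (Sum.inr b)).card
                ≤ (Finset.range i).card := by
                  apply Finset.card_le_card_of_injOn Fin.val
                  · intro a ha
                    exact Finset.mem_range.mpr (Finset.mem_filter.mp ha).2.1
                  · exact Fin.val_injective.injOn
              _ = i := Finset.card_range i
          · calc (Finset.univ.filter fun a : Fin n =>
                  a.val < i ∧ G.Adj (Sum.inl a) (Sum.inr b)).card
                ≤ (Finset.univ.filter fun a : Fin n => G.Adj (Sum.inl a) (Sum.inr b)).card := by
                  apply Finset.card_le_card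
                  intro a ha
                  simp only [Finset.mem_filter, Finset.mem_univ, true_and] at *
                  exact ha.2
              _ = β b.val := hB b
      _ = ∑ j ∈ Finset.range n, min i (β j) :=
          Fin.sum_univ_eq_sum_range (fun j => min i (β j)) n
      _ = ∑ j ∈ Finset.range i, conjugate β j := (sum_conj n β hβ_supp i).symm
  · intro hdom
    have hβn := beta_le n β hβ_anti hβ_sum hβ_supp
    obtain ⟨M, hrowM, hcolM⟩ := exists_matrix n β hβ_anti hβn hβ_supp
      (∑ m ∈ Finset.range n, (psum (conjugate β) (m+1) - psum α (m+1))) α hα_anti hα_supp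
      (by unfold psum; rw [hα_sum, hβ_sum])
      (by intro m; unfold psum; exact hdom m)
      le_rfl
    set G := SimpleGraph.fromRel
      (fun u v => ∃ a b : Fin n, u = Sum.inl a ∧ v = Sum.inr b ∧ M a b) with hGdef
    have hLL : ∀ a b : Fin n, ¬ G.Adj (Sum.inl a) (Sum.inl b) := by
      intro a b
      rw [hGdef, SimpleGraph.fromRel_adj]
      simp
    have hRR : ∀ a b : Fin n, ¬ G.Adj (Sum.inr a) (Sum.inr b) := by
      intro a b
      rw [hGdef, SimpleGraph.fromRel_adj]
      simp
    have hadjAB : ∀ a b : Fin n, G.Adj (Sum.inl a) (Sum.inr b) ↔ M a b := by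
      intro a b
      rw [hGdef, SimpleGraph.fromRel_adj]
      simp
    refine ⟨G, fun a b => ⟨hLL a b, hRR a b⟩, ?_, ?_⟩
    · intro a
      rw [degree_eq_card_inl G hLL a]
      refine card_filter_eq_of_iff Finset.univ _ _
        (Finset.univ.filter fun b => M a b) _ (fun x => ?_) (hrowM a)
      simp [Finset.mem_filter, hadjAB]
    · intro b
      rw [degree_eq_card_inr G hRR b]
      refine card_filter_eq_of_iff Finset.univ _ _
        (Finset.univ.filter fun a => M a b) _ (fun x => ?_) (hcolM b)
      simp [Finset.mem_filter, hadjAB]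
end

section
/- Define g(ρ) = 1 + 2( ρ^{-1/2}/(1-ρ^{-1/2}) + (log ρ / 2)·ρ^{-1/2}/(1-ρ^{-1/2})^2 ) for ρ > 1. Then g is continuous and strictly decreasing on (1, ∞) with limit 1 as ρ → ∞, and there exists a unique ρ_* > 1 with g(ρ_*) = 5/4; moreover 1528 < ρ_* < 1529. -/
open Real
open Filter

/-- The function `g(ρ)` bounding the sum of absolute correlations. -/
noncomputable def gCorr (ρ : ℝ) : ℝ :=
  1 + 2 * (ρ ^ (-(1 : ℝ) / 2) / (1 - ρ ^ (-(1 : ℝ) / 2)) +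
    (Real.log ρ / 2) * ρ ^ (-(1 : ℝ) / 2) / (1 - ρ ^ (-(1 : ℝ) / 2)) ^ 2)

noncomputable def hAux (t : ℝ) : ℝ :=
  1 + 2 * (t / (1 - t) + -Real.log t * t / (1 - t) ^ 2)

lemma gCorr_eq_hAux {ρ : ℝ} (hρ : 0 < ρ) : gCorr ρ = hAux (ρ ^ (-(1:ℝ)/2)) := by
  unfold gCorr hAux
  rw [Real.log_rpow hρ]
  ring

lemma hAux_hasDerivAt {x : ℝ} (hx : 0 < x) (hx1 : x < 1) :
    HasDerivAt hAux (2 * (-Real.log x * (1 + x)) / (1 - x) ^ 3) x := by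
  have h1 : (1:ℝ) - x ≠ 0 := by intro h; linarith [sub_eq_zero.mp h]
  have hd1 : HasDerivAt (fun t : ℝ => t / (1 - t))
      ((1 * (1 - x) - x * (-1)) / (1 - x) ^ 2) x :=
    (hasDerivAt_id x).div ((hasDerivAt_id x).const_sub 1) h1
  have hn : HasDerivAt (fun t : ℝ => -Real.log t * t)
      (-(x⁻¹) * x + -Real.log x * 1) x :=
    ((Real.hasDerivAt_log hx.ne').neg).mul (hasDerivAt_id x)
  have hden : HasDerivAt (fun t : ℝ => (1 - t) ^ 2)
      (2 * (1 - x) ^ 1 * -1) x := by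
    simpa using (((hasDerivAt_id x).const_sub 1).fun_pow 2)
  have hd2 : HasDerivAt (fun t : ℝ => -Real.log t * t / (1 - t) ^ 2)
      (((-(x⁻¹) * x + -Real.log x * 1) * (1 - x) ^ 2 -
        (-Real.log x * x) * (2 * (1 - x) ^ 1 * -1)) / ((1 - x) ^ 2) ^ 2) x :=
    hn.div hden (pow_ne_zero 2 h1)
  have : HasDerivAt hAux _ x := ((hd1.add hd2).const_mul 2).const_add 1
  convert this using 1
  field_simp
  ring

lemma hAux_strictMono : StrictMonoOn hAux (Set.Ioo 0 1) := by
  apply strictMonoOn_of_deriv_pos (convex_Ioo 0 1)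
  · intro x hx
    exact (hAux_hasDerivAt hx.1 hx.2).continuousAt.continuousWithinAt
  · intro x hx
    rw [interior_Ioo] at hx
    rw [(hAux_hasDerivAt hx.1 hx.2).deriv]
    have hlog := Real.log_neg hx.1 hx.2
    apply div_pos
    · nlinarith [mul_pos (neg_pos.mpr hlog) (by linarith [hx.1] : (0:ℝ) < 1 + x)]
    · have : (0:ℝ) < 1 - x := by linarith [hx.2]
      positivity

lemma rpow_half_mem {ρ : ℝ} (hρ : 1 < ρ) : ρ ^ (-(1:ℝ)/2) ∈ Set.Ioo (0:ℝ) 1 :=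
  ⟨Real.rpow_pos_of_pos (by linarith) _,
   Real.rpow_lt_one_of_one_lt_of_neg hρ (by norm_num)⟩

lemma gCorr_strictAnti : StrictAntiOn gCorr (Set.Ioi 1) := by
  intro x hx y hy hxy
  rw [gCorr_eq_hAux (lt_trans one_pos hx), gCorr_eq_hAux (lt_trans one_pos hy)]
  apply hAux_strictMono (rpow_half_mem hy) (rpow_half_mem hx)
  have hx0 : (0:ℝ) < x := lt_trans one_pos hx
  rw [show (-(1:ℝ)/2) = -(1/2) by norm_num,
    Real.rpow_neg (by linarith : (0:ℝ) ≤ y), Real.rpow_neg hx0.le]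
  exact inv_strictAnti₀ (Real.rpow_pos_of_pos hx0 _)
    (Real.rpow_lt_rpow hx0.le hxy (by norm_num))

lemma gCorr_contAt {ρ : ℝ} (hρ : 1 < ρ) : ContinuousAt gCorr ρ := by
  have hρ0 : (0:ℝ) < ρ := lt_trans one_pos hρ
  have hu : ContinuousAt (fun ρ : ℝ => ρ ^ (-(1:ℝ)/2)) ρ :=
    Real.continuousAt_rpow_const ρ _ (Or.inl hρ0.ne')
  have hmem := rpow_half_mem hρ
  have h1 : (1:ℝ) - ρ ^ (-(1:ℝ)/2) ≠ 0 := by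
    have := hmem.2; intro h; rw [sub_eq_zero] at h; linarith
  unfold gCorr
  exact continuousAt_const.add
    ((((hu.div (continuousAt_const.sub hu) h1).add
      ((((Real.continuousAt_log hρ0.ne').div_const 2).mul hu).div
        ((continuousAt_const.sub hu).pow 2) (pow_ne_zero 2 h1)))).const_mul 2)

lemma gCorr_tendsto : Tendsto gCorr atTop (nhds 1) := by
  have hexp : (-(1:ℝ)/2) = -(1/2) := by norm_num
  have hu : Tendsto (fun ρ : ℝ => ρ ^ (-(1:ℝ)/2)) atTop (nhds 0) := by
    rw [hexp]; exact tendsto_rpow_neg_atTop (by norm_num)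
  have hlu : Tendsto (fun ρ : ℝ => Real.log ρ * ρ ^ (-(1:ℝ)/2)) atTop (nhds 0) := by
    have h := (isLittleO_log_rpow_atTop (by norm_num : (0:ℝ) < 1/2)).tendsto_div_nhds_zero
    refine h.congr' ?_
    filter_upwards [eventually_gt_atTop (0:ℝ)] with x hx
    rw [hexp, Real.rpow_neg hx.le, div_eq_mul_inv]
  have hA : Tendsto (fun ρ : ℝ => ρ ^ (-(1:ℝ)/2) / (1 - ρ ^ (-(1:ℝ)/2)))
      atTop (nhds 0) := by
    have := hu.div (tendsto_const_nhds.sub hu) (by norm_num : (1:ℝ) - 0 ≠ 0)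
    rw [zero_div] at this; exact this
  have hB : Tendsto (fun ρ : ℝ =>
      Real.log ρ / 2 * ρ ^ (-(1:ℝ)/2) / (1 - ρ ^ (-(1:ℝ)/2)) ^ 2) atTop (nhds 0) := by
    have hnum : Tendsto (fun ρ : ℝ => Real.log ρ / 2 * ρ ^ (-(1:ℝ)/2)) atTop (nhds 0) := by
      have h2 := hlu.div_const 2
      rw [zero_div] at h2
      exact h2.congr fun x => by ring
    have := hnum.div ((tendsto_const_nhds.sub hu).pow 2) (by norm_num : ((1:ℝ) - 0) ^ 2 ≠ 0)
    rw [zero_div] at this; exact this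
  have hc : Tendsto (fun _ : ℝ => (1:ℝ)) atTop (nhds 1) := tendsto_const_nhds
  have hfin := hc.add ((hA.add hB).const_mul 2)
  unfold gCorr
  convert hfin using 2
  norm_num

lemma gAux_mono {a t l L : ℝ} (ha : 0 < a) (hat : a ≤ t) (ht : t < 1)
    (hl : 0 ≤ l) (hlL : l ≤ L) :
    1 + 2 * (a / (1 - a) + l / 2 * a / (1 - a) ^ 2) ≤
      1 + 2 * (t / (1 - t) + L / 2 * t / (1 - t) ^ 2) := by
  have h1t : (0:ℝ) < 1 - t := by linarith
  have h1a : (0:ℝ) < 1 - a := by linarith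
  have e1 : a / (1 - a) ≤ t / (1 - t) := by
    rw [div_le_div_iff₀ h1a h1t]; nlinarith
  have e2 : a / (1 - a) ^ 2 ≤ t / (1 - t) ^ 2 := by
    rw [div_le_div_iff₀ (by positivity) (by positivity)]
    nlinarith [mul_nonneg (sub_nonneg.mpr hat) (by nlinarith : (0:ℝ) ≤ 1 - a * t)]
  have e3 : l / 2 * a / (1 - a) ^ 2 ≤ L / 2 * t / (1 - t) ^ 2 := by
    rw [mul_div_assoc, mul_div_assoc]
    exact mul_le_mul (by linarith) e2 (by positivity) (by linarith)
  linarith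

lemma sqrt1528_lt : Real.sqrt 1528 < 390897/10000 := by
  rw [Real.sqrt_lt' (by norm_num : (0:ℝ) < 390897/10000)]
  norm_num

lemma lt_sqrt1529 : (391024/10000 : ℝ) < Real.sqrt 1529 := by
  rw [Real.lt_sqrt (by norm_num)]
  norm_num

lemma log1528_gt : (1503/205 : ℝ) < Real.log 1528 := by
  rw [Real.lt_log_iff_exp_lt (by norm_num : (0:ℝ) < 1528)]
  have h : Real.exp (1503/205) ^ (205:ℕ) < (1528:ℝ) ^ (205:ℕ) := by
    rw [← Real.exp_nat_mul]
    have h2 : ((205:ℕ):ℝ) * (1503/205) = ((1503:ℕ):ℝ) * 1 := by norm_num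
    rw [h2, Real.exp_nat_mul]
    calc Real.exp 1 ^ (1503:ℕ) < (2.7182818286:ℝ) ^ (1503:ℕ) :=
          pow_lt_pow_left₀ Real.exp_one_lt_d9 (Real.exp_pos 1).le (by norm_num)
      _ ≤ (1528:ℝ) ^ (205:ℕ) := by
        rw [show (2.7182818286:ℝ) = 13591409143 / 5000000000 by norm_num]
        rw [div_pow, div_le_iff₀ (by positivity)]
        have : ((13591409143:ℕ) ^ 9) ^ 167 ≤ (1528 ^ 5) ^ 41 * (5000000000 ^ 9) ^ 167 :=
          Nat.le_of_ble_eq_true rfl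
        rw [show (1503:ℕ) = 9 * 167 from rfl, show (205:ℕ) = 5 * 41 from rfl, pow_mul, pow_mul,
          pow_mul]
        exact_mod_cast this
  exact lt_of_pow_lt_pow_left₀ 205 (by norm_num) h

lemma log1529_lt : Real.log 1529 < 2537/346 := by
  rw [Real.log_lt_iff_lt_exp (by norm_num : (0:ℝ) < 1529)]
  apply lt_of_pow_lt_pow_left₀ 346 (Real.exp_pos _).le
  rw [← Real.exp_nat_mul]
  have h2 : ((346:ℕ):ℝ) * (2537/346) = ((2537:ℕ):ℝ) * 1 := by norm_num
  rw [h2, Real.exp_nat_mul]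
  calc (1529:ℝ) ^ (346:ℕ) ≤ (2.7182818283:ℝ) ^ (2537:ℕ) := by
        rw [show (2.7182818283:ℝ) = 27182818283 / 10000000000 by norm_num]
        rw [div_pow, le_div_iff₀ (by positivity)]
        have : ((1529:ℕ) ^ 2) ^ 173 * (10000000000 ^ 43) ^ 59 ≤ (27182818283 ^ 43) ^ 59 :=
          Nat.le_of_ble_eq_true rfl
        rw [show (346:ℕ) = 2 * 173 from rfl, show (2537:ℕ) = 43 * 59 from rfl, pow_mul, pow_mul,
          pow_mul]
        exact_mod_cast this
    _ < Real.exp 1 ^ (2537:ℕ) :=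
        pow_lt_pow_left₀ Real.exp_one_gt_d9 (by norm_num) (by norm_num)

lemma rpow_eq_inv_sqrt {ρ : ℝ} (hρ : 0 ≤ ρ) :
    ρ ^ (-(1:ℝ)/2) = (Real.sqrt ρ)⁻¹ := by
  rw [show (-(1:ℝ)/2) = -(1/2) by norm_num, Real.rpow_neg hρ, ← Real.sqrt_eq_rpow]

lemma gCorr_1528 : 5/4 < gCorr 1528 := by
  have hs0 : 0 < Real.sqrt 1528 := Real.sqrt_pos.mpr (by norm_num)
  have ht : (10000/390897 : ℝ) ≤ (1528:ℝ) ^ (-(1:ℝ)/2) := by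
    rw [rpow_eq_inv_sqrt (by norm_num),
      show (10000/390897:ℝ) = ((390897:ℝ)/10000)⁻¹ by norm_num]
    exact (inv_anti₀ hs0 sqrt1528_lt.le)
  have ht1 : (1528:ℝ) ^ (-(1:ℝ)/2) < 1 :=
    Real.rpow_lt_one_of_one_lt_of_neg (by norm_num) (by norm_num)
  have key := gAux_mono (a := 10000/390897) (l := 1503/205)
    (by norm_num) ht ht1 (by norm_num) log1528_gt.le
  unfold gCorr
  refine lt_of_lt_of_le ?_ key
  norm_num

lemma gCorr_1529 : gCorr 1529 < 5/4 := by
  have ht : (1529:ℝ) ^ (-(1:ℝ)/2) ≤ (10000/391024 : ℝ) := by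
    rw [rpow_eq_inv_sqrt (by norm_num),
      show (10000/391024:ℝ) = ((391024:ℝ)/10000)⁻¹ by norm_num]
    exact (inv_anti₀ (by norm_num) lt_sqrt1529.le)
  have ht0 : (0:ℝ) < (1529:ℝ) ^ (-(1:ℝ)/2) := Real.rpow_pos_of_pos (by norm_num) _
  have key := gAux_mono (t := 10000/391024) (L := 2537/346)
    ht0 ht (by norm_num) (Real.log_nonneg (by norm_num)) log1529_lt.le
  unfold gCorr
  refine lt_of_le_of_lt key ?_
  norm_num

theorem gCorr_properties :
    ContinuousOn gCorr (Set.Ioi 1) ∧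
    StrictAntiOn gCorr (Set.Ioi 1) ∧
    Filter.Tendsto gCorr Filter.atTop (nhds 1) ∧
    (∃! ρ : ℝ, ρ ∈ Set.Ioi (1 : ℝ) ∧ gCorr ρ = 5 / 4) ∧
    (∀ ρ : ℝ, ρ ∈ Set.Ioi (1 : ℝ) → gCorr ρ = 5 / 4 → 1528 < ρ ∧ ρ < 1529) := by
  have cont : ContinuousOn gCorr (Set.Ioi 1) :=
    fun x hx => (gCorr_contAt hx).continuousWithinAt
  have anti := gCorr_strictAnti
  have h28 := gCorr_1528
  have h29 := gCorr_1529
  have h1528 : (1528:ℝ) ∈ Set.Ioi (1:ℝ) := by norm_num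
  have h1529 : (1529:ℝ) ∈ Set.Ioi (1:ℝ) := by norm_num
  refine ⟨cont, anti, gCorr_tendsto, ?_, ?_⟩
  · have hsub : Set.Icc (1528:ℝ) 1529 ⊆ Set.Ioi 1 :=
      fun x hx => lt_of_lt_of_le (by norm_num) hx.1
    have hIVT := intermediate_value_Icc' (by norm_num : (1528:ℝ) ≤ 1529) (cont.mono hsub)
    obtain ⟨ρ, hρmem, hρeq⟩ := hIVT ⟨h29.le, h28.le⟩
    have hρIoi : ρ ∈ Set.Ioi (1:ℝ) := hsub hρmem
    exact ⟨ρ, ⟨hρIoi, hρeq⟩, fun y hy =>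
      anti.injOn hy.1 hρIoi (hy.2.trans hρeq.symm)⟩
  · intro ρ hρ heq
    constructor
    · by_contra h
      push_neg at h
      rcases eq_or_lt_of_le h with rfl | h'
      · linarith
      · have := anti hρ h1528 h'
        linarith
    · by_contra h
      push_neg at h
      rcases eq_or_lt_of_le h with rfl | h'
      · linarith
      · have := anti h1529 hρ h'
        linarith
end
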